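/- If f : ℝ^d → ℝ is differentiable and satisfies the dissipativity condition ⟨∇f(x), x⟩ ≥ m‖x‖² − b for all x (with constants m > 0, b ≥ 0), then for all x, f(x) ≥ (m/4)‖x‖² + f(x*) − b/2, where x* is a global minimizer of f. -/

import Mathlib

open RealInnerProductSpace

/-- Under dissipativity `⟪∇f(x), x⟫ ≥ m‖x‖² − b`, the function is lower bounded by a
quadratic: `f(x) ≥ (m/4)‖x‖² + f(x⋆) − b/2` where `x⋆` is a global minimizer. -/
theorem dissipative_quadratic_lower_bound {d : ℕ}
    (f : EuclideanSpace ℝ (Fin d) → ℝ) (m b : ℝ) (hm : 0 < m) (hb : 0 ≤ b)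
    (hf : Differentiable ℝ f)
    (hdiss : ∀ x, m * ‖x‖ ^ 2 - b ≤ ⟪gradient f x, x⟫)
    (xstar : EuclideanSpace ℝ (Fin d)) (hmin : ∀ y, f xstar ≤ f y) :
    ∀ x, m / 4 * ‖x‖ ^ 2 + f xstar - b / 2 ≤ f x := by
  intro x
  set G : ℝ → ℝ := fun t =>
    t ^ 2 * f (t • x) - (m * ‖x‖ ^ 2 * t ^ 4 / 4 + (f xstar - b / 2) * t ^ 2) with hGdef
  have hgx : ∀ t : ℝ, HasDerivAt (fun s : ℝ => f (s • x))
      (⟪gradient f (t • x), x⟫) t := by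
    intro t
    have h1 : HasFDerivAt f ((InnerProductSpace.toDual ℝ _) (gradient f (t • x))) (t • x) :=
      (hf (t • x)).hasGradientAt.hasFDerivAt
    have h2 : HasDerivAt (fun s : ℝ => s • x) x t := by
      simpa using (hasDerivAt_id t).smul_const x
    have h3 : HasDerivAt (fun s : ℝ => f (s • x))
        ((InnerProductSpace.toDual ℝ _) (gradient f (t • x)) x) t := h1.comp_hasDerivAt t h2
    simpa using h3
  have hG : ∀ t : ℝ, HasDerivAt G
      (2 * t * f (t • x) + t ^ 2 * ⟪gradient f (t • x), x⟫
        - (m * ‖x‖ ^ 2 * t ^ 3 + (f xstar - b / 2) * (2 * t))) t := by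
    intro t
    have h1 : HasDerivAt (fun s : ℝ => s ^ 2 * f (s • x))
        ((2 * t ^ 1) * f (t • x) + t ^ 2 * ⟪gradient f (t • x), x⟫) t :=
      (hasDerivAt_pow 2 t).mul (hgx t)
    have h2 : HasDerivAt (fun s : ℝ => m * ‖x‖ ^ 2 * s ^ 4 / 4 + (f xstar - b / 2) * s ^ 2)
        (m * ‖x‖ ^ 2 * (4 * t ^ 3) / 4 + (f xstar - b / 2) * (2 * t ^ 1)) t := by
      exact (((hasDerivAt_pow 4 t).const_mul (m * ‖x‖ ^ 2)).div_const 4).add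
        ((hasDerivAt_pow 2 t).const_mul (f xstar - b / 2))
    have := h1.sub h2
    refine this.congr_deriv ?_
    ring
  have hmono : MonotoneOn G (Set.Icc (0 : ℝ) 1) := by
    apply monotoneOn_of_deriv_nonneg (convex_Icc 0 1)
    · exact (Continuous.continuousOn (by
        rw [hGdef]; have := hf.continuous; fun_prop))
    · intro t ht
      exact ((hG t).differentiableAt).differentiableWithinAt
    · intro t ht
      rw [interior_Icc] at ht
      rw [(hG t).deriv]
      have ht0 : 0 < t := ht.1
      have hd := hdiss (t • x)
      have hip : ⟪gradient f (t • x), t • x⟫ = t * ⟪gradient f (t • x), x⟫ :=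
        real_inner_smul_right _ _ _
      rw [hip] at hd
      have hnorm : ‖t • x‖ ^ 2 = t ^ 2 * ‖x‖ ^ 2 := by
        rw [norm_smul]; rw [Real.norm_eq_abs]; rw [mul_pow, sq_abs]
      rw [hnorm] at hd
      have hmin' := hmin (t • x)
      nlinarith [mul_le_mul_of_nonneg_left hd ht0.le]
  have h0 : G 0 = 0 := by simp [hGdef]
  have h1v : G 1 = f x - (m * ‖x‖ ^ 2 / 4 + (f xstar - b / 2)) := by
    simp [hGdef]
  have := hmono (Set.left_mem_Icc.2 zero_le_one) (Set.right_mem_Icc.2 zero_le_one) zero_le_one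
  rw [h0, h1v] at this
  linarith
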